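/- Every homogeneous element P of degree q in (a,b) in the algebra A = C<a,b> (relation ab − ba = b²) that is monic in a can be written as a product P = (a − r₁·b)·(a − r₂·b)···(a − r_q·b) for suitable complex numbers r₁,…,r_q. -/

import Mathlib

/-- The defining relation of the algebra `A = ℂ⟨a,b⟩` with `a·b − b·a = b²`,
i.e. `a·b = b·a + b·b`; the generator `true` plays the role of `a` and
`false` that of `b`. -/
inductive ABRel : FreeAlgebra ℂ Bool → FreeAlgebra ℂ Bool → Prop
  | comm : ABRel (FreeAlgebra.ι ℂ true * FreeAlgebra.ι ℂ false)
      (FreeAlgebra.ι ℂ false * FreeAlgebra.ι ℂ true +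
        FreeAlgebra.ι ℂ false * FreeAlgebra.ι ℂ false)

/-- The algebra `A = ℂ⟨a,b⟩` with the relation `ab − ba = b²`. -/
abbrev ABAlgebra := RingQuot ABRel

/-- The generator `a` of `A`. -/
noncomputable def genA : ABAlgebra := RingQuot.mkAlgHom ℂ ABRel (FreeAlgebra.ι ℂ true)

/-- The generator `b` of `A`. -/
noncomputable def genB : ABAlgebra := RingQuot.mkAlgHom ℂ ABRel (FreeAlgebra.ι ℂ false)

lemma AB_rel : genA * genB = genB * genA + genB * genB := by
  unfold genA genB
  rw [← map_mul, ← map_mul, ← map_mul, ← map_add]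
  exact RingQuot.mkAlgHom_rel ℂ ABRel.comm

lemma A_mul_B_pow (m : ℕ) :
    genA * genB ^ m = genB ^ m * genA + (m : ℂ) • genB ^ (m + 1) := by
  induction m with
  | zero => simp
  | succ m ih =>
      have : genA * genB ^ (m + 1) = (genA * genB) * genB ^ m := by
        rw [pow_succ', mul_assoc]
      rw [this, AB_rel, add_mul, mul_assoc, ih]
      push_cast
      rw [mul_add, mul_smul_comm]
      have hB : genB * genB ^ m = genB ^ (m + 1) := (pow_succ' genB m).symm
      have hB2 : genB * genB ^ (m + 1) = genB ^ (m + 2) := (pow_succ' genB (m+1)).symm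
      have hB3 : (genB * genB) * genB ^ m = genB ^ (m + 2) := by
        rw [mul_assoc, hB, hB2]
      rw [hB2, hB3, ← mul_assoc, hB]
      module

/-- The coefficients of the normal form of `∏ (a - rᵢ b)`. -/
noncomputable def dcoef : List ℂ → ℕ → ℂ
  | [], 0 => 1
  | [], _ + 1 => 0
  | r :: s, 0 => ((s.length : ℂ) - r) * dcoef s 0
  | r :: s, j + 1 => dcoef s j + ((s.length : ℂ) - (j + 1) - r) * dcoef s (j + 1)

lemma dcoef_eq_zero : ∀ (s : List ℂ) (j : ℕ), s.length < j → dcoef s j = 0 := by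
  intro s
  induction s with
  | nil => intro j hj; cases j with
    | zero => omega
    | succ j => rfl
  | cons r s ih =>
      intro j hj
      cases j with
      | zero => omega
      | succ j =>
          have h1 : s.length < j := by simpa using hj
          have h2 : s.length < j + 1 := by omega
          simp [dcoef, ih j h1, ih (j+1) h2]

lemma prodExpand (s : List ℂ) :
    (s.map (fun r => genA - r • genB)).prod =
      ∑ j ∈ Finset.range (s.length + 1),
        dcoef s j • (genB ^ (s.length - j) * genA ^ j) := by
  induction s with
  | nil => simp [dcoef]
  | cons r s ih =>
      simp only [List.map_cons, List.prod_cons, ih, List.length_cons]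
      rw [Finset.mul_sum]
      have key : ∀ j ∈ Finset.range (s.length + 1),
          (genA - r • genB) * (dcoef s j • (genB ^ (s.length - j) * genA ^ j)) =
            dcoef s j • (genB ^ (s.length - j) * genA ^ (j + 1)) +
              ((((s.length : ℂ) - j) - r) * dcoef s j) • (genB ^ (s.length + 1 - j) * genA ^ j) := by
        intro j hj
        have hj' : j ≤ s.length := Nat.lt_succ_iff.mp (Finset.mem_range.mp hj)
        have hc : ((s.length - j : ℕ) : ℂ) = (s.length : ℂ) - j := by
          push_cast [Nat.cast_sub hj']; ring
        have he : s.length - j + 1 = s.length + 1 - j := by omega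
        have h1 : genA * (genB ^ (s.length - j) * genA ^ j)
            = genB ^ (s.length - j) * genA ^ (j + 1)
              + ((s.length : ℂ) - j) • (genB ^ (s.length + 1 - j) * genA ^ j) := by
          rw [← mul_assoc, A_mul_B_pow (s.length - j), hc, he, add_mul, smul_mul_assoc,
            mul_assoc, ← pow_succ']
        have h2 : genB * (genB ^ (s.length - j) * genA ^ j)
            = genB ^ (s.length + 1 - j) * genA ^ j := by
          rw [← mul_assoc, ← pow_succ', he]
        rw [sub_mul, mul_smul_comm, h1, smul_mul_assoc, mul_smul_comm, h2]
        rw [smul_add]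
        module
      rw [Finset.sum_congr rfl key, Finset.sum_add_distrib]
      conv_rhs => rw [Finset.sum_range_succ']
      have hd0 : dcoef (r :: s) 0 = ((s.length : ℂ) - r) * dcoef s 0 := rfl
      have hds : ∀ j : ℕ, dcoef (r :: s) (j + 1)
          = dcoef s j + ((s.length : ℂ) - (j + 1) - r) * dcoef s (j + 1) := fun j => rfl
      simp only [hds, hd0, add_smul, Nat.succ_sub_succ, Nat.sub_zero, pow_zero, mul_one]
      rw [Finset.sum_add_distrib]
      have hS2 : ∑ j ∈ Finset.range (s.length + 1),
            (((s.length : ℂ) - j - r) * dcoef s j) • (genB ^ (s.length + 1 - j) * genA ^ j)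
          = (∑ j ∈ Finset.range (s.length + 1),
              (((s.length : ℂ) - (j + 1) - r) * dcoef s (j + 1)) •
                (genB ^ (s.length - j) * genA ^ (j + 1)))
            + (((s.length : ℂ) - r) * dcoef s 0) • genB ^ (s.length + 1) := by
        rw [Finset.sum_range_succ']
        rw [Finset.sum_range_succ (fun j => (((s.length : ℂ) - (j + 1) - r) * dcoef s (j + 1)) •
                (genB ^ (s.length - j) * genA ^ (j + 1)))]
        rw [dcoef_eq_zero s (s.length + 1) (by omega)]
        simp only [Nat.cast_zero, sub_zero, Nat.sub_zero, pow_zero, mul_one, mul_zero, zero_smul,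
          add_zero, Nat.succ_sub_succ, Nat.cast_add, Nat.cast_one]
      rw [hS2]
      abel
noncomputable def gpoly : List ℂ → Polynomial ℂ
  | [] => 1
  | r :: s => (Polynomial.X - Polynomial.C (r - s.length)) * gpoly s

open Polynomial in
lemma X_mul_asc (j : ℕ) : (X : ℂ[X]) * ascPochhammer ℂ j
    = ascPochhammer ℂ (j + 1) - (j : ℂ) • ascPochhammer ℂ j := by
  rw [ascPochhammer_succ_right, mul_add, smul_eq_C_mul, C_eq_natCast]
  ring

open Polynomial in
lemma polyD (s : List ℂ) :
    ∑ j ∈ Finset.range (s.length + 1), dcoef s j • ascPochhammer ℂ j = gpoly s := by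
  induction s with
  | nil => simp [dcoef, gpoly]
  | cons r s ih =>
      simp only [List.length_cons, gpoly, ← ih]
      rw [Finset.mul_sum]
      have key : ∀ j ∈ Finset.range (s.length + 1),
          (X - C (r - (s.length : ℂ))) * (dcoef s j • ascPochhammer ℂ j) =
            dcoef s j • ascPochhammer ℂ (j + 1) +
              ((((s.length : ℂ) - j) - r) * dcoef s j) • ascPochhammer ℂ j := by
        intro j hj
        rw [sub_mul, mul_smul_comm, X_mul_asc, mul_smul_comm, smul_sub]
        rw [show (C (r - (s.length : ℂ)) * ascPochhammer ℂ j)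
            = (r - (s.length : ℂ)) • ascPochhammer ℂ j from (smul_eq_C_mul _).symm]
        module
      rw [Finset.sum_congr rfl key, Finset.sum_add_distrib]
      conv_lhs => rw [Finset.sum_range_succ']
      have hd0 : dcoef (r :: s) 0 = ((s.length : ℂ) - r) * dcoef s 0 := rfl
      have hds : ∀ j : ℕ, dcoef (r :: s) (j + 1)
          = dcoef s j + ((s.length : ℂ) - (j + 1) - r) * dcoef s (j + 1) := fun j => rfl
      simp only [hds, hd0, add_smul]
      rw [Finset.sum_add_distrib]
      have hS2 : ∑ j ∈ Finset.range (s.length + 1),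
            (((s.length : ℂ) - j - r) * dcoef s j) • ascPochhammer ℂ j
          = (∑ j ∈ Finset.range (s.length + 1),
              (((s.length : ℂ) - (j + 1) - r) * dcoef s (j + 1)) • ascPochhammer ℂ (j + 1))
            + (((s.length : ℂ) - r) * dcoef s 0) • ascPochhammer ℂ 0 := by
        rw [Finset.sum_range_succ']
        rw [Finset.sum_range_succ (fun j => (((s.length : ℂ) - (j + 1) - r) * dcoef s (j + 1)) •
                ascPochhammer ℂ (j + 1))]
        rw [dcoef_eq_zero s (s.length + 1) (by omega)]
        simp only [Nat.cast_zero, sub_zero, mul_zero, zero_smul, add_zero, Nat.cast_add,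
          Nat.cast_one]
      rw [hS2]
      abel

def shiftList : List ℂ → List ℂ
  | [] => []
  | x :: l => (x + l.length) :: shiftList l

lemma shiftList_length (t : List ℂ) : (shiftList t).length = t.length := by
  induction t with
  | nil => rfl
  | cons x l ih => simp [shiftList, ih]

open Polynomial in
lemma gpoly_shift (t : List ℂ) :
    gpoly (shiftList t) = (t.map (fun x => X - C x)).prod := by
  induction t with
  | nil => rfl
  | cons x l ih =>
      simp only [shiftList, gpoly, shiftList_length, List.map_cons, List.prod_cons, ih]
      norm_num

open Polynomial in
lemma asc_coeff_top (q : ℕ) (x : ℕ → ℂ) :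
    (∑ j ∈ Finset.range (q + 1), x j • ascPochhammer ℂ j).coeff q = x q := by
  rw [Polynomial.finset_sum_coeff, Finset.sum_range_succ]
  have h1 : ∀ j ∈ Finset.range q, (x j • ascPochhammer ℂ j).coeff q = 0 := by
    intro j hj
    rw [Polynomial.coeff_smul, Polynomial.coeff_eq_zero_of_natDegree_lt, smul_zero]
    rw [ascPochhammer_natDegree]
    exact Finset.mem_range.mp hj
  rw [Finset.sum_congr rfl h1, Finset.sum_const_zero, zero_add, Polynomial.coeff_smul]
  have : (ascPochhammer ℂ q).coeff q = 1 := by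
    have := (monic_ascPochhammer (S := ℂ) q)
    simpa [ascPochhammer_natDegree] using this.coeff_natDegree
  rw [this, smul_eq_mul, mul_one]

lemma asc_extract (q : ℕ) (x y : ℕ → ℂ)
    (h : ∑ j ∈ Finset.range (q + 1), x j • ascPochhammer ℂ j =
         ∑ j ∈ Finset.range (q + 1), y j • ascPochhammer ℂ j) :
    ∀ j < q + 1, x j = y j := by
  induction q with
  | zero =>
      intro j hj
      interval_cases j
      have := congrArg (Polynomial.coeff · 0) h
      simpa [asc_coeff_top 0 x, asc_coeff_top 0 y] using this
  | succ q ih =>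
      have htop : x (q + 1) = y (q + 1) := by
        have := congrArg (Polynomial.coeff · (q + 1)) h
        simpa [asc_coeff_top (q + 1) x, asc_coeff_top (q + 1) y] using this
      have hrest : ∑ j ∈ Finset.range (q + 1), x j • ascPochhammer ℂ j =
          ∑ j ∈ Finset.range (q + 1), y j • ascPochhammer ℂ j := by
        rw [Finset.sum_range_succ (fun j => x j • ascPochhammer ℂ j),
          Finset.sum_range_succ (fun j => y j • ascPochhammer ℂ j), htop] at h
        exact add_right_cancel h
      intro j hj
      rcases Nat.lt_succ_iff_lt_or_eq.mp hj with h' | h'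
      · exact ih hrest j h'
      · rw [h']; exact htop

open Polynomial in
theorem homogeneous_monic_factorization (q : ℕ) (c : ℕ → ℂ) :
    ∃ r : Fin q → ℂ,
      genA ^ q + ∑ k ∈ Finset.range q, c k • (genB ^ (q - k) * genA ^ k) =
        (List.ofFn (fun k : Fin q => genA - r k • genB)).prod := by
  classical
  set e : ℕ → ℂ := fun j => if j < q then c j else 1 with he
  set f : ℂ[X] := ∑ j ∈ Finset.range (q + 1), e j • ascPochhammer ℂ j with hf
  have hsplit : f = (∑ k ∈ Finset.range q, c k • ascPochhammer ℂ k) + ascPochhammer ℂ q := by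
    rw [hf, Finset.sum_range_succ]
    congr 1
    · exact Finset.sum_congr rfl fun k hk => by
        simp [he, Finset.mem_range.mp hk]
    · simp [he]
  have hdeglt : (∑ k ∈ Finset.range q, c k • ascPochhammer ℂ k).degree
      < (ascPochhammer ℂ q).degree := by
    have hdq : (ascPochhammer ℂ q).degree = (q : ℕ) :=
      degree_eq_natDegree (monic_ascPochhammer (S := ℂ) q).ne_zero ▸ by
        rw [ascPochhammer_natDegree]
    rw [hdq]
    refine lt_of_le_of_lt (Polynomial.degree_sum_le _ _) ?_
    rw [Finset.sup_lt_iff (by exact_mod_cast WithBot.bot_lt_coe (q : ℕ))]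
    intro k hk
    refine lt_of_le_of_lt (Polynomial.degree_smul_le _ _) ?_
    have hdk : (ascPochhammer ℂ k).degree = (k : ℕ) :=
      degree_eq_natDegree (monic_ascPochhammer (S := ℂ) k).ne_zero ▸ by
        rw [ascPochhammer_natDegree]
    rw [hdk]
    exact_mod_cast Finset.mem_range.mp hk
  have hmonic : f.Monic := by
    rw [hsplit]
    exact (monic_ascPochhammer (S := ℂ) q).add_of_right hdeglt
  have hdeg : f.natDegree = q := by
    rw [hsplit, natDegree_eq_of_degree_eq (degree_add_eq_right_of_degree_lt hdeglt),
      ascPochhammer_natDegree]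
  -- roots
  set t : List ℂ := f.roots.toList with ht
  have htlen : t.length = q := by
    rw [ht, Multiset.length_toList]
    rw [Polynomial.splits_iff_card_roots.mp (IsAlgClosed.splits f), hdeg]
  have hfact : f = (t.map fun x => X - C x).prod := by
    have h1 := (IsAlgClosed.splits f).eq_prod_roots_of_monic hmonic
    rw [h1, ← Multiset.coe_toList f.roots, Multiset.map_coe, Multiset.prod_coe]
  set sL : List ℂ := shiftList t with hsL
  have hslen : sL.length = q := by rw [hsL, shiftList_length, htlen]
  have hpoly : ∑ j ∈ Finset.range (q + 1), dcoef sL j • ascPochhammer ℂ j =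
      ∑ j ∈ Finset.range (q + 1), e j • ascPochhammer ℂ j := by
    have := polyD sL
    rw [hslen] at this
    rw [this, gpoly_shift, ← hfact, hf]
  have hcoef : ∀ j < q + 1, dcoef sL j = e j := asc_extract q _ _ hpoly
  refine ⟨fun k => sL.get (Fin.cast hslen.symm k), ?_⟩
  have hofn : (List.ofFn fun k : Fin q => genA - (sL.get (Fin.cast hslen.symm k)) • genB)
      = sL.map fun x => genA - x • genB := by
    apply List.ext_getElem
    · simp [hslen]
    · intro n h1 h2
      simp [List.getElem_ofFn, List.getElem_map]
  rw [hofn, prodExpand sL, hslen]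
  conv_rhs => rw [Finset.sum_range_succ]
  have hsum : ∑ j ∈ Finset.range q, dcoef sL j • (genB ^ (q - j) * genA ^ j)
      = ∑ k ∈ Finset.range q, c k • (genB ^ (q - k) * genA ^ k) :=
    Finset.sum_congr rfl fun j hj => by
      rw [hcoef j (by have := Finset.mem_range.mp hj; omega)]
      simp [he, Finset.mem_range.mp hj]
  have htopv : dcoef sL q • (genB ^ (q - q) * genA ^ q) = genA ^ q := by
    rw [hcoef q (by omega)]; simp [he]
  rw [hsum, htopv]
  abel
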